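/- Suppose k ≥ 4 and let D̄ ⊆ E be a dimer covering, i.e., every vertex of 𝒯^k is incident to exactly one edge of D̄. Then d_{D̄} = 1 < (k-1)/2, and the weakly periodic configurations σ^{D̄+} and σ^{D̄-} are ground state configurations; moreover, for every finite nonempty connected set C ⊆ V, H(σ_C) - H(σ^{D̄+}) ≥ 2J(k-3)|C| > 0. -/

import Mathlib

open Classical

/-- `G` is a Cayley tree with branching number `k`: an infinite connected acyclic
simple graph in which every vertex has exactly `k + 1` neighbors. -/
structure IsCayleyTree {V : Type*} (G : SimpleGraph V) (k : ℕ) : Prop where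
  infinite : Infinite V
  connected : G.Connected
  acyclic : G.IsAcyclic
  degree : ∀ v : V, (G.neighborSet v).ncard = k + 1

/-- A spin configuration takes values in `{-1, +1}`. -/
def IsSpin {V : Type*} (σ : V → ℤ) : Prop := ∀ v, σ v = 1 ∨ σ v = -1

/-- `σ` is frustrated exactly on the edges of `D`: for every edge `{x,y}` of `G`,
`σ x * σ y = -1` if `{x,y} ∈ D` and `σ x * σ y = 1` otherwise. -/
def SatisfiesD {V : Type*} (G : SimpleGraph V) (D : Set (Sym2 V)) (σ : V → ℤ) : Prop :=
  ∀ x y : V, G.Adj x y →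
    (s(x, y) ∈ D → σ x * σ y = -1) ∧ (s(x, y) ∉ D → σ x * σ y = 1)

/-- The excess energy `H(σ) - H(σbase) = J * Σ_{{x,y} ∈ E} (σbase x * σbase y - σ x * σ y)`,
a sum with finitely many nonzero terms when `σ` and `σbase` differ at finitely many sites. -/
noncomputable def excessEnergy {V : Type*} (G : SimpleGraph V) (J : ℝ) (σ σbase : V → ℤ) : ℝ :=
  J * ∑ᶠ e ∈ G.edgeSet,
      ((Sym2.lift ⟨fun x y => σbase x * σbase y - σ x * σ y, fun _ _ => by ring⟩ e : ℤ) : ℝ)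

/-- The configuration obtained from `σ` by flipping all spins in `C`. -/
noncomputable def flipSpins {V : Type*} (σ : V → ℤ) (C : Set V) : V → ℤ :=
  fun v => if v ∈ C then -σ v else σ v

/-- The number `d_D(v)` of edges of `D` incident to the vertex `v`. -/
noncomputable def incidentCount {V : Type*} (D : Set (Sym2 V)) (v : V) : ℕ :=
  {e ∈ D | v ∈ e}.ncard

/-- A set of vertices is connected if any two of its vertices are joined by a
walk staying within the set. -/
def SetConnected {V : Type*} (G : SimpleGraph V) (S : Set V) : Prop :=
  ∀ x ∈ S, ∀ y ∈ S, ∃ p : G.Walk x y, ∀ z ∈ p.support, z ∈ S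

namespace DimerAux

open SimpleGraph

variable {V : Type*} {G : SimpleGraph V}

/-- The unique path from `r` to `v` in a tree. -/
noncomputable def pathTo (hT : G.IsTree) (r v : V) : G.Walk r v :=
  ((hT.existsUnique_path r v).exists).choose

lemma pathTo_isPath (hT : G.IsTree) (r v : V) : (pathTo hT r v).IsPath :=
  ((hT.existsUnique_path r v).exists).choose_spec

lemma pathTo_unique (hT : G.IsTree) {r v : V} (p : G.Walk r v) (hp : p.IsPath) :
    p = pathTo hT r v :=
  (hT.existsUnique_path r v).unique hp (pathTo_isPath hT r v)

lemma pathTo_self (hT : G.IsTree) (r : V) : pathTo hT r r = SimpleGraph.Walk.nil :=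
  (pathTo_unique hT _ SimpleGraph.Walk.IsPath.nil).symm

lemma isPath_concat {r x y : V} {p : G.Walk r x} (hp : p.IsPath) (h : G.Adj x y)
    (hy : y ∉ p.support) : (p.concat h).IsPath := by
  rw [← Walk.isPath_reverse_iff, Walk.reverse_concat, Walk.cons_isPath_iff]
  exact ⟨(Walk.isPath_reverse_iff p).2 hp, by simpa [Walk.support_reverse] using hy⟩

lemma pathTo_concat (hT : G.IsTree) {r x y : V} (h : G.Adj x y)
    (hlt : (pathTo hT r x).length < (pathTo hT r y).length) :
    pathTo hT r y = (pathTo hT r x).concat h := by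
  by_cases hy : y ∈ (pathTo hT r x).support
  · exfalso
    have h1 : ((pathTo hT r x).takeUntil y hy) = pathTo hT r y :=
      pathTo_unique hT _ ((pathTo_isPath hT r x).takeUntil hy)
    have h2 := Walk.length_takeUntil_le (pathTo hT r x) hy
    rw [h1] at h2
    omega
  · exact (pathTo_unique hT _ (isPath_concat (pathTo_isPath hT r x) h hy)).symm

lemma adj_length_ne (hT : G.IsTree) (r : V) {x y : V} (h : G.Adj x y) :
    (pathTo hT r x).length ≠ (pathTo hT r y).length := by
  intro heq
  by_cases hy : y ∈ (pathTo hT r x).support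
  · have h1 : ((pathTo hT r x).takeUntil y hy) = pathTo hT r y :=
      pathTo_unique hT _ ((pathTo_isPath hT r x).takeUntil hy)
    have h2 := (pathTo hT r x).take_spec hy
    have h3 := congrArg Walk.length h2
    rw [Walk.length_append, h1, heq] at h3
    have h4 : ((pathTo hT r x).dropUntil y hy).length = 0 := by omega
    exact h.ne' (Walk.eq_of_length_eq_zero h4)
  · have h5 := pathTo_unique hT _ (isPath_concat (pathTo_isPath hT r x) h hy)
    have h6 := congrArg Walk.length h5
    rw [Walk.length_concat] at h6
    omega

/-- The endpoint of an edge farther from `r` (in a tree); `r` as junk value. -/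
noncomputable def far (hT : G.IsTree) (r : V) : Sym2 V → V :=
  Sym2.lift ⟨fun x y =>
    if (pathTo hT r x).length < (pathTo hT r y).length then y
    else if (pathTo hT r y).length < (pathTo hT r x).length then x else r,
    fun x y => by dsimp only; split_ifs <;> first | rfl | omega⟩

lemma far_mk (hT : G.IsTree) (r : V) {x y : V}
    (hlt : (pathTo hT r x).length < (pathTo hT r y).length) :
    far hT r s(x, y) = y := by
  simp only [far, Sym2.lift_mk, if_pos hlt]

end DimerAux

namespace DimerAux

open SimpleGraph

lemma excess_self {V : Type*} (G : SimpleGraph V) (J : ℝ) (σ : V → ℤ) :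
    excessEnergy G J σ σ = 0 := by
  have h : ∀ e ∈ G.edgeSet,
      ((Sym2.lift ⟨fun x y => σ x * σ y - σ x * σ y, fun _ _ => by ring⟩ e : ℤ) : ℝ) = 0 := by
    intro e _
    induction e using Sym2.ind with
    | _ x y => simp
  exact mul_eq_zero_of_right _ (finsum_mem_eq_zero_of_forall_eq_zero h)

lemma master {V : Type*} {G : SimpleGraph V} {k : ℕ} (hk : 4 ≤ k)
    (hconn : G.Connected) (hacyc : G.IsAcyclic)
    (hdeg : ∀ v : V, (G.neighborSet v).ncard = k + 1)
    {J : ℝ} (hJ : 0 < J)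
    (Dbar : Set (Sym2 V))
    (hdimer : ∀ v : V, incidentCount Dbar v = 1)
    (σ : V → ℤ) (hσ : IsSpin σ) (hσD : SatisfiesD G Dbar σ)
    (C : Set V) (hfin : C.Finite) (hne : C.Nonempty) :
    excessEnergy G J (flipSpins σ C) σ ≥ 2 * J * (((k : ℝ) - 3) * (C.ncard : ℝ) + 2) := by
  classical
  obtain ⟨r, hrC⟩ := hne
  have hT : G.IsTree := ⟨hconn, hacyc⟩
  have nfin : ∀ v : V, (G.neighborSet v).Finite := by
    intro v
    by_contra h
    have h2 : (G.neighborSet v).Infinite := h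
    have h3 := h2.ncard
    rw [hdeg] at h3
    omega
  set Nf : V → Finset V := fun v => (nfin v).toFinset with hNf
  have hNfcard : ∀ v, (Nf v).card = k + 1 := fun v => by
    rw [hNf, ← Set.ncard_eq_toFinset_card _ (nfin v), hdeg]
  have hmemNf : ∀ v w, w ∈ Nf v ↔ G.Adj v w := fun v w => by
    rw [hNf]; exact (nfin v).mem_toFinset
  set Cf : Finset V := hfin.toFinset with hCf
  have hCfcard : Cf.card = C.ncard := (Set.ncard_eq_toFinset_card _ hfin).symm
  have hmemCf : ∀ v, v ∈ Cf ↔ v ∈ C := fun v => hfin.mem_toFinset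
  have hrCf : r ∈ Cf := (hmemCf r).2 hrC
  set Inc : Finset (V × V) := Cf.biUnion (fun v => (Nf v).image (fun w => (v, w))) with hInc
  have mem_Inc : ∀ p : V × V, p ∈ Inc ↔ p.1 ∈ C ∧ G.Adj p.1 p.2 := by
    intro p
    simp only [hInc, Finset.mem_biUnion, Finset.mem_image]
    constructor
    · rintro ⟨v, hv, w, hw, rfl⟩
      exact ⟨(hmemCf v).1 hv, (hmemNf v w).1 hw⟩
    · rintro ⟨h1, h2⟩
      exact ⟨p.1, (hmemCf _).2 h1, p.2, (hmemNf _ _).2 h2, rfl⟩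
  have hInccard : Inc.card = Cf.card * (k + 1) := by
    rw [hInc, Finset.card_biUnion (fun v _ w _ hvw => ?_)]
    · have hh : ∀ v ∈ Cf, ((Nf v).image (fun w => (v, w))).card = k + 1 := by
        intro v _
        rw [Finset.card_image_of_injective _
          (fun a b hab => by simpa using congrArg Prod.snd hab), hNfcard]
      rw [Finset.sum_congr rfl hh, Finset.sum_const, smul_eq_mul]
    · simp only [Finset.disjoint_left, Finset.mem_image]
      rintro p ⟨a, _, rfl⟩ ⟨b, _, hb⟩
      exact hvw (by simpa using (congrArg Prod.fst hb).symm)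
  set g : V × V → Sym2 V := fun p => s(p.1, p.2) with hg
  set Ef : Finset (Sym2 V) := Inc.image g with hEf
  have mem_Ef : ∀ e : Sym2 V, e ∈ Ef ↔ ∃ x y, G.Adj x y ∧ x ∈ C ∧ e = s(x, y) := by
    intro e
    simp only [hEf, Finset.mem_image]
    constructor
    · rintro ⟨p, hp, rfl⟩
      obtain ⟨h1, h2⟩ := (mem_Inc p).1 hp
      exact ⟨p.1, p.2, h2, h1, rfl⟩
    · rintro ⟨x, y, h1, h2, rfl⟩
      exact ⟨(x, y), (mem_Inc (x, y)).2 ⟨h2, h1⟩, rfl⟩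
  set Intf : Finset (Sym2 V) := Ef.filter (fun e => ∀ x ∈ e, x ∈ C) with hIntf
  set Bf : Finset (Sym2 V) := Ef.filter (fun e => ¬ ∀ x ∈ e, x ∈ C) with hBf
  have mem_Bf : ∀ e : Sym2 V, e ∈ Bf ↔ ∃ x y, G.Adj x y ∧ x ∈ C ∧ y ∉ C ∧ e = s(x, y) := by
    intro e
    rw [hBf, Finset.mem_filter]
    constructor
    · rintro ⟨he, hno⟩
      obtain ⟨x, y, h1, h2, rfl⟩ := (mem_Ef _).1 he
      refine ⟨x, y, h1, h2, fun hyC => hno ?_, rfl⟩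
      intro z hz
      rcases Sym2.mem_iff.1 hz with rfl | rfl
      · exact h2
      · exact hyC
    · rintro ⟨x, y, h1, h2, h3, rfl⟩
      exact ⟨(mem_Ef _).2 ⟨x, y, h1, h2, rfl⟩, fun hall => h3 (hall y (by simp))⟩
  -- fiberwise counting
  have hfiber := Finset.card_eq_sum_card_fiberwise
    (f := g) (s := Inc) (t := Ef) (fun p hp => Finset.mem_image_of_mem g hp)
  have hfiber_le : ∀ e ∈ Ef,
      (Inc.filter (fun p => g p = e)).card ≤ if (∀ x ∈ e, x ∈ C) then 2 else 1 := by
    intro e he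
    obtain ⟨x, y, hadj, hxC, rfl⟩ := (mem_Ef e).1 he
    have hsub : Inc.filter (fun p => g p = s(x, y)) ⊆ {(x, y), (y, x)} := by
      intro p hp
      rw [Finset.mem_filter] at hp
      have h2 := hp.2
      simp only [hg] at h2
      rw [Sym2.eq_iff] at h2
      simp only [Finset.mem_insert, Finset.mem_singleton]
      rcases h2 with ⟨ha, hb⟩ | ⟨ha, hb⟩
      · exact Or.inl (Prod.ext ha hb)
      · exact Or.inr (Prod.ext ha hb)
    split_ifs with hall
    · calc (Inc.filter (fun p => g p = s(x, y))).card
          ≤ ({(x, y), (y, x)} : Finset (V × V)).card := Finset.card_le_card hsub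
        _ ≤ 2 := (Finset.card_insert_le _ _).trans (by simp)
    · have hyC : y ∉ C := fun hy => hall (fun z hz => by
        rcases Sym2.mem_iff.1 hz with rfl | rfl
        exacts [hxC, hy])
      have hsub1 : Inc.filter (fun p => g p = s(x, y)) ⊆ {(x, y)} := by
        intro p hp
        have hmem := hsub hp
        rw [Finset.mem_filter] at hp
        have hp1 : p.1 ∈ C := ((mem_Inc p).1 hp.1).1
        simp only [Finset.mem_insert, Finset.mem_singleton] at hmem ⊢
        rcases hmem with rfl | rfl
        · rfl
        · exact absurd hp1 hyC
      exact (Finset.card_le_card hsub1).trans (by simp)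
  have hcount : Cf.card * (k + 1) ≤ 2 * Intf.card + Bf.card := by
    rw [← hInccard, hfiber]
    calc ∑ e ∈ Ef, (Inc.filter (fun p => g p = e)).card
        ≤ ∑ e ∈ Ef, (if (∀ x ∈ e, x ∈ C) then 2 else 1) := Finset.sum_le_sum hfiber_le
      _ = 2 * Intf.card + Bf.card := by
          rw [Finset.sum_ite, Finset.sum_const, Finset.sum_const, smul_eq_mul, smul_eq_mul,
            ← hIntf, ← hBf]
          ring
  -- internal edges bound via the tree structure
  have key : ∀ e ∈ Intf, ∃ x y, ∃ h : G.Adj x y, e = s(x, y) ∧ x ∈ C ∧ y ∈ C ∧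
      (pathTo hT r x).length < (pathTo hT r y).length ∧ far hT r e = y ∧
      pathTo hT r y = (pathTo hT r x).concat h := by
    intro e he
    rw [hIntf, Finset.mem_filter] at he
    obtain ⟨x, y, hadj, hxC, rfl⟩ := (mem_Ef _).1 he.1
    have hyC : y ∈ C := he.2 y (by simp)
    rcases (adj_length_ne hT r hadj).lt_or_gt with hlt | hlt
    · exact ⟨x, y, hadj, rfl, hxC, hyC, hlt, far_mk hT r hlt, pathTo_concat hT hadj hlt⟩
    · refine ⟨y, x, hadj.symm, Sym2.eq_swap.symm, hyC, hxC, hlt, ?_,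
        pathTo_concat hT hadj.symm hlt⟩
      rw [Sym2.eq_swap]
      exact far_mk hT r hlt
  have hIntbound : Intf.card + 1 ≤ Cf.card := by
    have hmaps : ∀ e ∈ Intf, far hT r e ∈ Cf.erase r := by
      intro e he
      obtain ⟨x, y, h, he', hxC, hyC, hlt, hfar, hcat⟩ := key e he
      rw [hfar]
      refine Finset.mem_erase.2 ⟨?_, (hmemCf y).2 hyC⟩
      intro hyr
      rw [hyr, pathTo_self hT r] at hlt
      simp at hlt
    have hinj : Set.InjOn (far hT r) ↑Intf := by
      intro e1 he1 e2 he2 hfe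
      obtain ⟨x1, y1, h1, he1', hx1, hy1, hl1, hf1, hc1⟩ := key e1 (Finset.mem_coe.1 he1)
      obtain ⟨x2, y2, h2, he2', hx2, hy2, hl2, hf2, hc2⟩ := key e2 (Finset.mem_coe.1 he2)
      rw [hf1, hf2] at hfe
      subst hfe
      have hw : (pathTo hT r x1).concat h1 = (pathTo hT r x2).concat h2 := by
        rw [← hc1, ← hc2]
      have hs := congrArg SimpleGraph.Walk.support hw
      rw [Walk.support_concat, Walk.support_concat] at hs
      have hs2 : (pathTo hT r x1).support = (pathTo hT r x2).support :=
        List.append_cancel_right hs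
      have hx12 : x1 = x2 := by
        have g1 : (pathTo hT r x1).support.getLast? = some x1 := by
          rw [List.getLast?_eq_getLast (Walk.support_ne_nil _), Walk.getLast_support]
        have g2 : (pathTo hT r x2).support.getLast? = some x2 := by
          rw [List.getLast?_eq_getLast (Walk.support_ne_nil _), Walk.getLast_support]
        rw [hs2, g2] at g1
        exact Option.some_injective _ g1.symm
      rw [he1', he2', hx12]
    have hle := Finset.card_le_card_of_injOn (far hT r) hmaps hinj
    have herase : (Cf.erase r).card = Cf.card - 1 := Finset.card_erase_of_mem hrCf
    have hpos : 1 ≤ Cf.card := Finset.card_pos.2 ⟨r, hrCf⟩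
    omega
  -- dimer bound
  set Mf : Finset (Sym2 V) := Bf.filter (fun e => e ∈ Dbar) with hMf
  have hMbound : Mf.card ≤ Cf.card := by
    set φ : Sym2 V → V := fun e => if h : ∃ x, x ∈ e ∧ x ∈ C then h.choose else r with hφ
    have hφspec : ∀ e ∈ Bf, (φ e) ∈ e ∧ (φ e) ∈ C := by
      intro e he
      obtain ⟨x, y, hadj, hxC, hyC, rfl⟩ := (mem_Bf e).1 he
      have hex : ∃ z, z ∈ s(x, y) ∧ z ∈ C := ⟨x, by simp, hxC⟩
      simp only [hφ, dif_pos hex]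
      exact hex.choose_spec
    refine Finset.card_le_card_of_injOn φ (fun e he => ?_) ?_
    · exact (hmemCf _).2 (hφspec e (Finset.mem_filter.1 he).1).2
    · intro e1 he1 e2 he2 hfe
      rw [Finset.mem_coe, hMf, Finset.mem_filter] at he1 he2
      obtain ⟨hb1, hd1⟩ := he1
      obtain ⟨hb2, hd2⟩ := he2
      have s1 := hφspec e1 hb1
      have s2 := hφspec e2 hb2
      have hcard := hdimer (φ e1)
      rw [incidentCount, Set.ncard_eq_one] at hcard
      obtain ⟨a, ha⟩ := hcard
      have m1 : e1 ∈ {e | e ∈ Dbar ∧ φ e1 ∈ e} := ⟨hd1, s1.1⟩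
      have m2 : e2 ∈ {e | e ∈ Dbar ∧ φ e1 ∈ e} := ⟨hd2, by rw [hfe]; exact s2.1⟩
      rw [ha] at m1 m2
      rw [Set.mem_singleton_iff] at m1 m2
      rw [m1, m2]
  -- the energy
  set τ : V → ℤ := flipSpins σ C with hτ
  set f : Sym2 V → ℝ := fun e =>
    ((Sym2.lift ⟨fun x y => σ x * σ y - τ x * τ y, fun _ _ => by ring⟩ e : ℤ) : ℝ) with hf
  have hexp : excessEnergy G J τ σ = J * ∑ᶠ e ∈ G.edgeSet, f e := rfl
  have hval : ∀ a b : V, σ a * σ b = 1 ∨ σ a * σ b = -1 := fun a b => by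
    rcases hσ a with h | h <;> rcases hσ b with h' | h' <;> simp [h, h']
  have hfval : ∀ x y : V, f s(x, y) = ((σ x * σ y - τ x * τ y : ℤ) : ℝ) := fun x y => by
    simp only [hf, Sym2.lift_mk]
  have hτval : ∀ v : V, (v ∈ C → τ v = -σ v) ∧ (v ∉ C → τ v = σ v) := fun v => by
    constructor <;> intro hv <;> simp only [hτ, flipSpins] <;> simp [hv]
  have hdiff : ∀ x y : V, x ∈ C → y ∉ C → (σ x * σ y - τ x * τ y : ℤ) = 2 * (σ x * σ y) := by
    intro x y hx hy
    rw [(hτval x).1 hx, (hτval y).2 hy]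
    ring
  have hsupp : G.edgeSet ∩ Function.support f = ↑Bf := by
    ext e
    induction e using Sym2.ind with
    | _ x y =>
      simp only [Set.mem_inter_iff, Function.mem_support, Finset.mem_coe]
      constructor
      · rintro ⟨hed, hne0⟩
        have hadj : G.Adj x y := hed
        by_cases hx : x ∈ C <;> by_cases hy : y ∈ C
        · exfalso
          apply hne0
          rw [hfval, (hτval x).1 hx, (hτval y).1 hy]
          push_cast
          ring
        · exact (mem_Bf _).2 ⟨x, y, hadj, hx, hy, rfl⟩
        · exact (mem_Bf _).2 ⟨y, x, hadj.symm, hy, hx, Sym2.eq_swap.symm⟩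
        · exfalso
          apply hne0
          rw [hfval, (hτval x).2 hx, (hτval y).2 hy]
          push_cast
          ring
      · intro heb
        obtain ⟨a, b, hadj, haC, hbC, hab⟩ := (mem_Bf _).1 heb
        rw [Sym2.eq_iff] at hab
        rcases hab with ⟨rfl, rfl⟩ | ⟨rfl, rfl⟩
        · refine ⟨hadj, ?_⟩
          rw [hfval, hdiff _ _ haC hbC]
          rcases hval x y with h | h <;> rw [h] <;> norm_num
        · refine ⟨hadj.symm, ?_⟩
          have hd2 : (σ x * σ y - τ x * τ y : ℤ) = 2 * (σ x * σ y) := by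
            rw [(hτval x).2 hbC, (hτval y).1 haC]
            ring
          rw [hfval, hd2]
          rcases hval x y with h | h <;> rw [h] <;> norm_num
  have hsum : ∑ᶠ e ∈ G.edgeSet, f e = ∑ e ∈ Bf, f e := by
    have hBsub : ↑Bf ⊆ Function.support f := hsupp ▸ Set.inter_subset_right
    have hsupp' : G.edgeSet ∩ Function.support f = ↑Bf ∩ Function.support f := by
      rw [hsupp, Set.inter_eq_self_of_subset_left hBsub]
    exact finsum_mem_eq_sum_of_inter_support_eq f hsupp'
  have hfB : ∀ e ∈ Bf, f e = if e ∈ Dbar then (-2 : ℝ) else 2 := by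
    intro e he
    obtain ⟨x, y, hadj, hxC, hyC, rfl⟩ := (mem_Bf e).1 he
    rw [hfval, hdiff _ _ hxC hyC]
    split_ifs with hd
    · rw [(hσD x y hadj).1 hd]; norm_num
    · rw [(hσD x y hadj).2 hd]; norm_num
  have hsumval : ∑ e ∈ Bf, f e = 2 * (Bf.card : ℝ) - 4 * (Mf.card : ℝ) := by
    have hsplit : Mf.card + (Bf.filter (fun e => ¬ e ∈ Dbar)).card = Bf.card := by
      rw [hMf]
      exact Finset.card_filter_add_card_filter_not (p := fun e => e ∈ Dbar)
    have hcast := congrArg (fun n : ℕ => (n : ℝ)) hsplit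
    push_cast at hcast
    rw [Finset.sum_congr rfl hfB, Finset.sum_ite, Finset.sum_const, Finset.sum_const,
      nsmul_eq_mul, nsmul_eq_mul, ← hMf]
    linarith
  rw [hexp, hsum, hsumval]
  have h1 : ((k : ℝ) + 1) * (Cf.card : ℝ) ≤ 2 * (Intf.card : ℝ) + (Bf.card : ℝ) := by
    have h := (Nat.cast_le (α := ℝ)).2 hcount
    push_cast at h
    linarith
  have h2 : (Intf.card : ℝ) + 1 ≤ (Cf.card : ℝ) := by exact_mod_cast hIntbound
  have h3 : (Mf.card : ℝ) ≤ (Cf.card : ℝ) := by exact_mod_cast hMbound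
  have h4 : (4 : ℝ) ≤ (k : ℝ) := by exact_mod_cast hk
  have hkey : 2 * (((k : ℝ) - 3) * ((Cf.card : ℕ) : ℝ) + 2)
      ≤ 2 * (Bf.card : ℝ) - 4 * (Mf.card : ℝ) := by linarith
  have hcc : (C.ncard : ℝ) = (Cf.card : ℝ) := by rw [hCfcard]
  rw [ge_iff_le, hcc]
  calc 2 * J * (((k : ℝ) - 3) * (Cf.card : ℝ) + 2)
      = J * (2 * (((k : ℝ) - 3) * (Cf.card : ℝ) + 2)) := by ring
    _ ≤ J * (2 * (Bf.card : ℝ) - 4 * (Mf.card : ℝ)) :=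
        mul_le_mul_of_nonneg_left hkey hJ.le

lemma ground {V : Type*} {G : SimpleGraph V} {k : ℕ} (hk : 4 ≤ k)
    (hconn : G.Connected) (hacyc : G.IsAcyclic)
    (hdeg : ∀ v : V, (G.neighborSet v).ncard = k + 1)
    {J : ℝ} (hJ : 0 < J) (Dbar : Set (Sym2 V))
    (hdimer : ∀ v : V, incidentCount Dbar v = 1)
    (σ : V → ℤ) (hσ : IsSpin σ) (hσD : SatisfiesD G Dbar σ)
    (τ : V → ℤ) (hτ : IsSpin τ) (hfin : {v : V | τ v ≠ σ v}.Finite) :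
    0 ≤ excessEnergy G J τ σ := by
  have hτeq : τ = flipSpins σ {v : V | τ v ≠ σ v} := by
    funext v
    by_cases hv : τ v = σ v
    · unfold flipSpins
      rw [if_neg (show v ∉ {v : V | τ v ≠ σ v} from fun h => h hv)]
      exact hv
    · have h2 : τ v = -σ v := by
        rcases hσ v with h | h <;> rcases hτ v with h' | h' <;> omega
      unfold flipSpins
      rw [if_pos (show v ∈ {v : V | τ v ≠ σ v} from hv), h2]
  rcases Set.eq_empty_or_nonempty {v : V | τ v ≠ σ v} with hS | hS
  · have hts : τ = σ := by
      funext v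
      exact not_not.1 (Set.eq_empty_iff_forall_notMem.1 hS v)
    rw [hts, excess_self]
  · rw [hτeq]
    have h := master hk hconn hacyc hdeg hJ Dbar hdimer σ hσ hσD _ hfin hS
    have h4 : (4 : ℝ) ≤ (k : ℝ) := by exact_mod_cast hk
    have hc : (0 : ℝ) ≤ ((k : ℝ) - 3) * (({v : V | τ v ≠ σ v}.ncard : ℕ) : ℝ) :=
      mul_nonneg (by linarith) (Nat.cast_nonneg _)
    nlinarith

end DimerAux

/-- For `k ≥ 4` and a dimer covering `D̄`, one has `d_{D̄} = 1 < (k-1)/2`,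
the weakly periodic configurations `σ^{D̄+}` and `σ^{D̄-}` are ground state
configurations, and for every finite nonempty connected `C`,
`H(σ_C) - H(σ^{D̄+}) ≥ 2J(k-3)|C| > 0`. -/
theorem dimer_ground_states {V : Type*} (G : SimpleGraph V) (k : ℕ) (hk : 4 ≤ k)
    (hG : IsCayleyTree G k) (root : V) (J : ℝ) (hJ : 0 < J)
    (Dbar : Set (Sym2 V)) (hDbar : Dbar ⊆ G.edgeSet)
    (hdimer : ∀ v : V, incidentCount Dbar v = 1)
    (σ : V → ℤ) (hσ : IsSpin σ) (hσroot : σ root = 1) (hσD : SatisfiesD G Dbar σ) :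
    (⨆ v, incidentCount Dbar v) = 1
      ∧ (1 : ℝ) < ((k : ℝ) - 1) / 2
      ∧ (∀ τ : V → ℤ, IsSpin τ → {v : V | τ v ≠ σ v}.Finite →
          0 ≤ excessEnergy G J τ σ)
      ∧ (∀ τ : V → ℤ, IsSpin τ → {v : V | τ v ≠ -σ v}.Finite →
          0 ≤ excessEnergy G J τ (fun v => -σ v))
      ∧ (∀ C : Set V, C.Finite → C.Nonempty → SetConnected G C →
          excessEnergy G J (flipSpins σ C) σ ≥ 2 * J * ((k : ℝ) - 3) * (C.ncard : ℝ)
            ∧ 0 < excessEnergy G J (flipSpins σ C) σ) := by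
  classical
  haveI := hG.infinite
  have h4 : (4 : ℝ) ≤ (k : ℝ) := by exact_mod_cast hk
  refine ⟨?_, by linarith, ?_, ?_, ?_⟩
  · simp only [hdimer]
    exact ciSup_const
  · intro τ hτ hfin
    exact DimerAux.ground hk hG.connected hG.acyclic hG.degree hJ Dbar hdimer σ hσ hσD τ hτ hfin
  · intro τ hτ hfin
    have hσ' : IsSpin (fun v => -σ v) := fun v => by
      rcases hσ v with h | h <;> simp [h]
    have hσD' : SatisfiesD G Dbar (fun v => -σ v) := by
      intro x y hxy
      obtain ⟨h1, h2⟩ := hσD x y hxy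
      refine ⟨fun h => ?_, fun h => ?_⟩
      · simpa only [neg_mul_neg] using h1 h
      · simpa only [neg_mul_neg] using h2 h
    exact DimerAux.ground hk hG.connected hG.acyclic hG.degree hJ Dbar hdimer _ hσ' hσD' τ hτ hfin
  · intro C hCfin hCne _
    have h := DimerAux.master hk hG.connected hG.acyclic hG.degree hJ Dbar hdimer σ hσ hσD
      C hCfin hCne
    have hc : (0 : ℝ) ≤ ((k : ℝ) - 3) * (C.ncard : ℝ) :=
      mul_nonneg (by linarith) (Nat.cast_nonneg _)
    constructor
    · nlinarith
    · nlinarith
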